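/- For every natural number k ≥ 1 and every vector x ∈ ℝ^{k+1}, the Parseval-type identity ‖c_k x‖² + ‖d_k x‖² = ‖x‖² holds, where ‖·‖ denotes the Euclidean norm. -/

import Mathlib

open Matrix

/-- The `k × (k+1)` lowering matrix `c_k`, with entries
`c_k[β,β] = √(k−β)/√(2k)`, `c_k[β,β+1] = √(β+1)/√(2k)`, and `0` otherwise. -/
noncomputable def cmat (k : ℕ) : Matrix (Fin k) (Fin (k+1)) ℝ :=
  fun β α =>
    if (α : ℕ) = (β : ℕ) then Real.sqrt ((k : ℝ) - (β : ℕ)) / Real.sqrt (2 * (k : ℝ))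
    else if (α : ℕ) = (β : ℕ) + 1 then Real.sqrt (((β : ℕ) : ℝ) + 1) / Real.sqrt (2 * (k : ℝ))
    else 0

/-- The `k × (k+1)` lowering matrix `d_k`, with entries
`d_k[β,β] = √(k−β)/√(2k)`, `d_k[β,β+1] = −√(β+1)/√(2k)`, and `0` otherwise. -/
noncomputable def dmat (k : ℕ) : Matrix (Fin k) (Fin (k+1)) ℝ :=
  fun β α =>
    if (α : ℕ) = (β : ℕ) then Real.sqrt ((k : ℝ) - (β : ℕ)) / Real.sqrt (2 * (k : ℝ))
    else if (α : ℕ) = (β : ℕ) + 1 then -Real.sqrt (((β : ℕ) : ℝ) + 1) / Real.sqrt (2 * (k : ℝ))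
    else 0

/-- Parseval-type identity: for `k ≥ 1` and any `x ∈ ℝ^{k+1}`,
`‖c_k x‖² + ‖d_k x‖² = ‖x‖²` in the Euclidean norm. -/
theorem parseval_cmat_dmat (k : ℕ) (hk : 1 ≤ k) (x : EuclideanSpace ℝ (Fin (k+1))) :
    ‖(WithLp.equiv 2 (Fin k → ℝ)).symm (cmat k *ᵥ (WithLp.equiv 2 (Fin (k+1) → ℝ)) x)‖ ^ 2 +
      ‖(WithLp.equiv 2 (Fin k → ℝ)).symm (dmat k *ᵥ (WithLp.equiv 2 (Fin (k+1) → ℝ)) x)‖ ^ 2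
      = ‖x‖ ^ 2 := by
  have hk0 : (0:ℝ) < (k:ℝ) := by exact_mod_cast hk
  set v : Fin (k+1) → ℝ := (WithLp.equiv 2 (Fin (k+1) → ℝ)) x with hv
  have hnorm2 : ∀ (n : ℕ) (w : Fin n → ℝ),
      ‖(WithLp.equiv 2 (Fin n → ℝ)).symm w‖ ^ 2 = ∑ i, (w i)^2 := by
    intro n w
    rw [EuclideanSpace.norm_eq, Real.sq_sqrt (by positivity)]
    simp [Real.norm_eq_abs, sq_abs]
  have hx : ‖x‖ ^ 2 = ∑ i, (v i)^2 := by
    rw [EuclideanSpace.norm_eq, Real.sq_sqrt (by positivity)]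
    simp [hv, Real.norm_eq_abs, sq_abs]
  have hc : ∀ β : Fin k, (cmat k *ᵥ v) β =
      (Real.sqrt ((k:ℝ) - β) * v β.castSucc + Real.sqrt ((β:ℝ) + 1) * v β.succ)
        / Real.sqrt (2 * k) := by
    intro β
    rw [mulVec, dotProduct, Fintype.sum_eq_add β.castSucc β.succ
      (by simp [Fin.ext_iff]) ?_]
    · simp [cmat, Fin.val_succ]
      ring
    · intro α ⟨h1, h2⟩
      have h1' : (α : ℕ) ≠ (β : ℕ) := fun h => h1 (Fin.ext (by simp [h]))
      have h2' : (α : ℕ) ≠ (β : ℕ) + 1 := fun h => h2 (Fin.ext (by simp [Fin.val_succ, h]))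
      simp [cmat, h1', h2']
  have hd : ∀ β : Fin k, (dmat k *ᵥ v) β =
      (Real.sqrt ((k:ℝ) - β) * v β.castSucc - Real.sqrt ((β:ℝ) + 1) * v β.succ)
        / Real.sqrt (2 * k) := by
    intro β
    rw [mulVec, dotProduct, Fintype.sum_eq_add β.castSucc β.succ
      (by simp [Fin.ext_iff]) ?_]
    · simp [dmat, Fin.val_succ]
      ring
    · intro α ⟨h1, h2⟩
      have h1' : (α : ℕ) ≠ (β : ℕ) := fun h => h1 (Fin.ext (by simp [h]))
      have h2' : (α : ℕ) ≠ (β : ℕ) + 1 := fun h => h2 (Fin.ext (by simp [Fin.val_succ, h]))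
      simp [dmat, h1', h2']
  rw [hnorm2, hnorm2, hx, ← Finset.sum_add_distrib]
  have hterm : ∀ β : Fin k, ((cmat k *ᵥ v) β)^2 + ((dmat k *ᵥ v) β)^2 =
      ((k:ℝ) - β)/k * (v β.castSucc)^2 + ((β:ℝ)+1)/k * (v β.succ)^2 := by
    intro β
    have hβk : ((β:ℕ):ℝ) ≤ (k:ℝ) := by exact_mod_cast (β.isLt.le)
    have ha : Real.sqrt ((k:ℝ) - β) ^ 2 = (k:ℝ) - β := Real.sq_sqrt (by linarith)
    have hb : Real.sqrt ((β:ℝ) + 1) ^ 2 = (β:ℝ) + 1 := Real.sq_sqrt (by positivity)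
    have hs : Real.sqrt (2 * (k:ℝ)) ^ 2 = 2 * k := Real.sq_sqrt (by positivity)
    rw [hc, hd, div_pow, div_pow, ← add_div, hs]
    have expand : (Real.sqrt ((k:ℝ) - β) * v β.castSucc + Real.sqrt ((β:ℝ) + 1) * v β.succ)^2
        + (Real.sqrt ((k:ℝ) - β) * v β.castSucc - Real.sqrt ((β:ℝ) + 1) * v β.succ)^2
        = 2 * (((k:ℝ) - β) * (v β.castSucc)^2) + 2 * (((β:ℝ)+1) * (v β.succ)^2) := by
      have := ha; have := hb; nlinarith [ha, hb]
    rw [expand]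
    field_simp
  rw [Finset.sum_congr rfl (fun β _ => hterm β)]
  have key : ∑ α : Fin (k+1), (v α)^2
      = ∑ α : Fin (k+1), (((k:ℝ) - α)/k * (v α)^2 + ((α:ℝ))/k * (v α)^2) := by
    apply Finset.sum_congr rfl
    intro α _
    field_simp
    ring
  rw [key, Finset.sum_add_distrib, Finset.sum_add_distrib, Fin.sum_univ_castSucc
    (f := fun α : Fin (k+1) => ((k:ℝ) - α)/k * (v α)^2),
    Fin.sum_univ_succ (f := fun α : Fin (k+1) => ((α:ℝ))/k * (v α)^2)]
  simp [Fin.val_succ]
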